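/- For every nonempty coalition S ⊆ N, the subgame of the RS-game (N₀, v) with player set S₀ = S ∪ {0} is balanced: there exists x ∈ ℝ^{S₀} with ∑_{i∈S₀} x_i = v(S₀) and ∑_{i∈T} x_i ≥ v(T) for every coalition T ⊆ S₀. -/
import Mathlib


open Finset

/-- An RS-situation with `n` retailers; the supplier is treated separately.
`c` is the unit production cost, `w` the wholesale price function and
`p i` the expected price function of retailer `i`.  All price functions are
decreasing and continuous on `[0, ∞)`, `w` exceeds `c` everywhere,
`p i 0 > w 0` and `p i` reaches the value `c` at some positive quantity. -/
structure RSSituation (n : ℕ) where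
  c : ℝ
  w : ℝ → ℝ
  p : Fin n → ℝ → ℝ
  w_anti : ∀ ⦃q q' : ℝ⦄, 0 ≤ q → q ≤ q' → w q' ≤ w q
  w_cont : ContinuousOn w (Set.Ici 0)
  w_gt_c : ∀ q : ℝ, 0 ≤ q → c < w q
  p_anti : ∀ i : Fin n, ∀ ⦃q q' : ℝ⦄, 0 ≤ q → q ≤ q' → p i q' ≤ p i q
  p_cont : ∀ i : Fin n, ContinuousOn (p i) (Set.Ici 0)
  p_zero_gt : ∀ i : Fin n, w 0 < p i 0
  exists_eq_c : ∀ i : Fin n, ∃ q : ℝ, 0 < q ∧ p i q = c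

namespace RSSituation

variable {n : ℕ}

/-- The feasible set `Q^S ⊆ [0,∞)^S` of order vectors for a coalition `S` of retailers. -/
def QSet (R : RSSituation n) (S : Finset (Fin n)) : Set (S → ℝ) :=
  {q | ∀ i : S, 0 ≤ q i ∧ R.w (∑ j : S, q j) ≤ R.p i.1 (q i)}

/-- The joint profit `∑_{i ∈ S} (p_i(q_i) - w(q_S)) q_i` of a coalition `S` of retailers. -/
def coalProfit (R : RSSituation n) (S : Finset (Fin n)) (q : S → ℝ) : ℝ :=
  ∑ i : S, (R.p i.1 (q i) - R.w (∑ j : S, q j)) * q i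

/-- `q` is an optimal order vector for the coalition `S` of retailers. -/
def IsCoalOpt (R : RSSituation n) (S : Finset (Fin n)) (q : S → ℝ) : Prop :=
  q ∈ R.QSet S ∧ ∀ q' ∈ R.QSet S, R.coalProfit S q' ≤ R.coalProfit S q

/-- The feasible set of order quantities of retailer `i` at unit price `c`. -/
def QcSet (R : RSSituation n) (i : Fin n) : Set ℝ :=
  {q | 0 ≤ q ∧ R.c ≤ R.p i q}

/-- The profit `(p_i(q) - c) q` of retailer `i` at unit price `c`. -/
def indProfit (R : RSSituation n) (i : Fin n) (q : ℝ) : ℝ :=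
  (R.p i q - R.c) * q

/-- `q` is an optimal order quantity for retailer `i` at unit price `c`. -/
def IsIndOpt (R : RSSituation n) (i : Fin n) (q : ℝ) : Prop :=
  q ∈ R.QcSet i ∧ ∀ q' ∈ R.QcSet i, R.indProfit i q' ≤ R.indProfit i q

/-- `v` is the RS-game determined by chosen optimal order vectors `qS S`
(for each retailer coalition `S`) and `qc i` (for each retailer `i`, when
cooperating with the supplier).  Players: `none` is the supplier `0`,
`some i` is retailer `i`. -/
def IsRSGame (R : RSSituation n) (qS : (S : Finset (Fin n)) → (S → ℝ))
    (qc : Fin n → ℝ) (v : Finset (Option (Fin n)) → ℝ) : Prop :=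
  v ∅ = 0 ∧ v {none} = 0 ∧
    (∀ S : Finset (Fin n), S.Nonempty → v (S.image some) = R.coalProfit S (qS S)) ∧
    (∀ S : Finset (Fin n), S.Nonempty →
      v (insert none (S.image some)) = ∑ i ∈ S, R.indProfit i (qc i))

/-- The core of a TU game on the player set `N₀ = Option (Fin n)`. -/
def core (v : Finset (Option (Fin n)) → ℝ) : Set (Option (Fin n) → ℝ) :=
  {x | ∑ i : Option (Fin n), x i = v Finset.univ ∧
    ∀ T : Finset (Option (Fin n)), v T ≤ ∑ i ∈ T, x i}

end RSSituation

/-- For every nonempty coalition `S` of retailers, the subgame of the RS-game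
with player set `S₀ = S ∪ {0}` is balanced. -/
theorem rs_subgame_balanced (n : ℕ) (R : RSSituation n)
    (qS : (S : Finset (Fin n)) → (S → ℝ)) (qc : Fin n → ℝ)
    (hqS : ∀ S : Finset (Fin n), S.Nonempty → R.IsCoalOpt S (qS S))
    (hqc : ∀ i : Fin n, R.IsIndOpt i (qc i))
    (v : Finset (Option (Fin n)) → ℝ) (hv : R.IsRSGame qS qc v)
    (S : Finset (Fin n)) (hS : S.Nonempty) :
    ∃ x : Option (Fin n) → ℝ,
      ∑ i ∈ insert none (S.image some), x i = v (insert none (S.image some)) ∧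
      ∀ T ⊆ insert none (S.image some), v T ≤ ∑ i ∈ T, x i := by
  obtain ⟨hv0, hvn, hvS, hvS0⟩ := hv
  have hinj : ∀ (T : Finset (Fin n)), ∀ x ∈ T, ∀ y ∈ T, some x = some y → x = y :=
    fun _ x _ y _ h => Option.some_injective _ h
  refine ⟨fun o => match o with | none => 0 | some i => R.indProfit i (qc i), ?_, ?_⟩
  · rw [Finset.sum_insert (by simp), hvS0 S hS, Finset.sum_image (hinj S)]
    simp
  · intro T hT
    have key : ∀ T' : Finset (Fin n), T'.Nonempty →
        R.coalProfit T' (qS T') ≤ ∑ i ∈ T', R.indProfit i (qc i) := by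
      intro T' hT'
      obtain ⟨hfeas, _⟩ := hqS T' hT'
      have hsum : (0:ℝ) ≤ ∑ j : T', qS T' j :=
        Finset.sum_nonneg fun j _ => (hfeas j).1
      have hc := R.w_gt_c _ hsum
      calc R.coalProfit T' (qS T')
          ≤ ∑ i : T', R.indProfit i.1 (qS T' i) := by
            apply Finset.sum_le_sum
            intro i _
            have h1 := (hfeas i).1
            have h2 := (hfeas i).2
            unfold RSSituation.indProfit
            nlinarith
        _ ≤ ∑ i : T', R.indProfit i.1 (qc i.1) := by
            apply Finset.sum_le_sum
            intro i _
            exact (hqc i.1).2 _ ⟨(hfeas i).1, le_trans hc.le (hfeas i).2⟩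
        _ = ∑ i ∈ T', R.indProfit i (qc i) := Finset.sum_coe_sort T' (fun i => R.indProfit i (qc i))
    by_cases hn : none ∈ T
    · have hU : T.erase none ⊆ S.image some := by
        intro a ha
        have h1 := hT (Finset.mem_of_mem_erase ha)
        rcases Finset.mem_insert.mp h1 with h | h
        · exact absurd h (Finset.ne_of_mem_erase ha)
        · exact h
      obtain ⟨T', _, hT'img⟩ := Finset.subset_image_iff.mp hU
      have hTeq : T = insert none (T'.image some) := by
        rw [hT'img, Finset.insert_erase hn]
      rcases T'.eq_empty_or_nonempty with he | hne
      · subst he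
        simp at hT'img
        rw [hTeq]
        simp [hvn]
      · rw [hTeq, hvS0 T' hne, Finset.sum_insert (by simp),
          Finset.sum_image (hinj T')]
        simp
    · have hU : T ⊆ S.image some := fun a ha => by
        rcases Finset.mem_insert.mp (hT ha) with h | h
        · exact absurd (h ▸ ha) hn
        · exact h
      obtain ⟨T', _, hT'img⟩ := Finset.subset_image_iff.mp hU
      rcases T'.eq_empty_or_nonempty with he | hne
      · subst he
        simp at hT'img
        simp [← hT'img, hv0]
      · rw [← hT'img, hvS T' hne, Finset.sum_image (hinj T')]
        exact key T' hne
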